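/- For every real c and all complex z₁, z₂ with |z₁| ≤ 1 and |z₂| ≤ 1, one has |z₁² − z₂² + c z₁ z₂| ≤ sqrt(4 + c²). -/

import Mathlib

theorem stmt_6 (c : ℝ) (z₁ z₂ : ℂ) (h₁ : ‖z₁‖ ≤ 1) (h₂ : ‖z₂‖ ≤ 1) :
    ‖z₁ ^ 2 - z₂ ^ 2 + (c:ℂ) * z₁ * z₂‖ ≤ Real.sqrt (4 + c ^ 2) := by
  set w₁ : ℂ := z₁ + ((c:ℂ)/2) * z₂ with hw₁
  set w₂ : ℂ := ((c:ℂ)/2) * z₁ - z₂ with hw₂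
  have hexpr : z₁ ^ 2 - z₂ ^ 2 + (c:ℂ) * z₁ * z₂ = z₁ * w₁ + z₂ * w₂ := by
    rw [hw₁, hw₂]; ring
  have h3 : ‖z₁ * w₁ + z₂ * w₂‖ ≤ ‖z₁‖ * ‖w₁‖ + ‖z₂‖ * ‖w₂‖ := by
    calc ‖z₁ * w₁ + z₂ * w₂‖ ≤ ‖z₁ * w₁‖ + ‖z₂ * w₂‖ := norm_add_le _ _
      _ = ‖z₁‖ * ‖w₁‖ + ‖z₂‖ * ‖w₂‖ := by rw [norm_mul, norm_mul]
  have hsq : ‖w₁‖ ^ 2 + ‖w₂‖ ^ 2 = (1 + c ^ 2 / 4) * (‖z₁‖ ^ 2 + ‖z₂‖ ^ 2) := by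
    simp only [hw₁, hw₂, Complex.sq_norm, Complex.normSq_apply,
      Complex.add_re, Complex.add_im, Complex.sub_re, Complex.sub_im, Complex.mul_re,
      Complex.mul_im, Complex.div_re, Complex.div_im, Complex.ofReal_re, Complex.ofReal_im,
      Complex.normSq_ofNat, Complex.re_ofNat, Complex.im_ofNat]
    ring
  have hs : ‖z₁‖ ^ 2 + ‖z₂‖ ^ 2 ≤ 2 := by
    nlinarith [norm_nonneg z₁, norm_nonneg z₂]
  have hs0 : (0:ℝ) ≤ ‖z₁‖ ^ 2 + ‖z₂‖ ^ 2 := by positivity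
  have hcs : (‖z₁‖ * ‖w₁‖ + ‖z₂‖ * ‖w₂‖) ^ 2 ≤
      (‖z₁‖ ^ 2 + ‖z₂‖ ^ 2) * (‖w₁‖ ^ 2 + ‖w₂‖ ^ 2) := by
    nlinarith [sq_nonneg (‖z₁‖ * ‖w₂‖ - ‖z₂‖ * ‖w₁‖)]
  have hkey : (0:ℝ) ≤ (1 + c ^ 2 / 4) * ((2 - (‖z₁‖ ^ 2 + ‖z₂‖ ^ 2)) *
      (2 + (‖z₁‖ ^ 2 + ‖z₂‖ ^ 2))) := by
    have : (0:ℝ) ≤ 1 + c ^ 2 / 4 := by positivity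
    have h5 : (0:ℝ) ≤ 2 - (‖z₁‖ ^ 2 + ‖z₂‖ ^ 2) := by linarith
    have h6 : (0:ℝ) ≤ 2 + (‖z₁‖ ^ 2 + ‖z₂‖ ^ 2) := by linarith
    exact mul_nonneg this (mul_nonneg h5 h6)
  have hfin : (‖z₁‖ * ‖w₁‖ + ‖z₂‖ * ‖w₂‖) ^ 2 ≤ 4 + c ^ 2 := by
    rw [hsq] at hcs
    nlinarith [hcs, hkey]
  have h0 : (0:ℝ) ≤ ‖z₁‖ * ‖w₁‖ + ‖z₂‖ * ‖w₂‖ := by positivity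
  calc ‖z₁ ^ 2 - z₂ ^ 2 + (c:ℂ) * z₁ * z₂‖ ≤ ‖z₁‖ * ‖w₁‖ + ‖z₂‖ * ‖w₂‖ := by
        rw [hexpr]; exact h3
    _ ≤ Real.sqrt (4 + c ^ 2) := (Real.le_sqrt h0 (by positivity)).mpr hfin
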